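/- For every connected stable ribbon graph Γ, with loop number ℓ(Γ) = 2g(Γ) + B(Γ) − 1, the two inequalities 2ℓ(Γ) + |L(Γ)| ≥ 2 + |V(Γ)| ≥ 3 and |H(Γ)| ≤ 3|L(Γ)| + 6(ℓ(Γ) − 1) hold (the latter read as |H(Γ)| + 6 ≤ 3|L(Γ)| + 6ℓ(Γ)). -/

import Mathlib

noncomputable section

/-- The set of orbits ("cycles", counting fixed points, i.e. `1`-cycles)
of a permutation `σ` of `α`: each orbit is recorded as the set of points
in the same cycle of `σ` as some given point. -/
def permOrbits {α : Type*} (σ : Equiv.Perm α) : Set (Set α) :=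
  Set.range fun a => {x | σ.SameCycle a x}

/-- The data of a stable ribbon graph (the stability and connectedness conditions
are stated separately as `RibbonGraph.IsStable` and `RibbonGraph.Connected`):
a finite set `H` of half-edges, a finite set `V` of vertices, an incidence map
`ρ : H → V`, an involution `κ` of `H` (whose fixed points are the legs and whose
`2`-element orbits are the edges), a permutation `c` of `H` preserving each fiber
of `ρ` (whose orbits inside `ρ⁻¹(v)` form the cyclic decomposition `C(v)` of the
vertex `v`), and genus and boundary functions `g, b : V → ℕ`. -/
structure RibbonGraph where
  /-- the half-edges -/
  H : Type
  /-- the vertices -/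
  V : Type
  fintH : Fintype H
  fintV : Fintype V
  /-- the incidence map -/
  ρ : H → V
  /-- the involution determining the legs and the edges -/
  κ : Equiv.Perm H
  κ_invol : ∀ h, κ (κ h) = h
  /-- the permutation determining the cyclic decomposition of each vertex -/
  c : Equiv.Perm H
  c_fiber : ∀ h, ρ (c h) = ρ h
  /-- the genus of each vertex -/
  g : V → ℕ
  /-- the boundary of each vertex -/
  b : V → ℕ

attribute [instance] RibbonGraph.fintH RibbonGraph.fintV

namespace RibbonGraph

variable (Γ : RibbonGraph)

/-- The set `L(Γ)` of legs: the fixed points of the involution `κ`. -/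
def legSet : Set Γ.H := {h | Γ.κ h = h}

/-- `|L(Γ)|`, the number of legs. -/
def numLegs : ℕ := Γ.legSet.ncard

/-- The set `E(Γ)` of edges: the `2`-element orbits of the involution `κ`. -/
def edgeSet : Set (Set Γ.H) := {S | ∃ h, Γ.κ h ≠ h ∧ S = {h, Γ.κ h}}

/-- `|E(Γ)|`, the number of edges. -/
def numEdges : ℕ := Γ.edgeSet.ncard

/-- `|v|`, the valency of a vertex: the number of incident half-edges. -/
def valency (v : Γ.V) : ℕ := {h | Γ.ρ h = v}.ncard

/-- `|C(v)|`, the number of cycles in the cyclic decomposition of the vertex `v`: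
the number of orbits of `c` contained in the fiber `ρ⁻¹(v)`. -/
def numCyclesAt (v : Γ.V) : ℕ := {S ∈ permOrbits Γ.c | ∃ h ∈ S, Γ.ρ h = v}.ncard

/-- `|C(Γ)|`, the total number of orbits of the permutation `c`. -/
def numCycles : ℕ := (permOrbits Γ.c).ncard

/-- `β_Γ#`, the number of orbits (cycles, counting fixed points) of the composite
permutation `c ∘ κ`. -/
def betaSharp : ℕ := (permOrbits (Γ.c * Γ.κ)).ncard

/-- The loop number `l(v) = 2 g(v) + b(v) + |C(v)| − 1` of a vertex. -/
def vertexLoop (v : Γ.V) : ℚ := 2 * Γ.g v + Γ.b v + Γ.numCyclesAt v - 1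

/-- Stability: `|C(v)| + b(v) > 0` and `2 l(v) + |v| ≥ 3` for every vertex. -/
def IsStable : Prop :=
  ∀ v : Γ.V, 0 < Γ.numCyclesAt v + Γ.b v ∧ 3 ≤ 2 * Γ.vertexLoop v + Γ.valency v

/-- The relation on vertices relating `ρ(h)` to `ρ(κ(h))` for each half-edge `h`. -/
def adjRel : Γ.V → Γ.V → Prop := fun v w => ∃ h, Γ.ρ h = v ∧ Γ.ρ (Γ.κ h) = w

/-- Connectedness: the vertex set is nonempty and the equivalence relation generated
by `adjRel` relates any two vertices. -/
def Connected : Prop :=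
  Nonempty Γ.V ∧ ∀ v w : Γ.V, Relation.EqvGen Γ.adjRel v w

/-- The first Betti number `b₁(Γ) = |E(Γ)| − |V(Γ)| + 1` of a connected graph. -/
def betti : ℚ := (Γ.numEdges : ℚ) - Fintype.card Γ.V + 1

/-- The genus `g(Γ) = 1 − |V(Γ)| + (|E(Γ)| + |C(Γ)| − β_Γ#)/2 + Σ_v g(v)` of a
connected stable ribbon graph. -/
def genus : ℚ :=
  1 - (Fintype.card Γ.V : ℚ) + ((Γ.numEdges : ℚ) + Γ.numCycles - Γ.betaSharp) / 2
    + ∑ v, (Γ.g v : ℚ)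

/-- The number of boundary components `B(Γ) = β_Γ# + Σ_v b(v)`. -/
def numBoundary : ℚ := (Γ.betaSharp : ℚ) + ∑ v, (Γ.b v : ℚ)

/-- The loop number `ℓ(Γ) = 2 g(Γ) + B(Γ) − 1`. -/
def loopNumber : ℚ := 2 * Γ.genus + Γ.numBoundary - 1

end RibbonGraph


open Classical in
private lemma ncard_fiberwise {α β : Type*} [Fintype β] (A : Set α) (hA : A.Finite) (f : α → β) :
    A.ncard = ∑ v, {a ∈ A | f a = v}.ncard := by
  classical
  have key := Finset.card_eq_sum_card_fiberwise (f := f) (s := hA.toFinset)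
    (t := Finset.univ) (fun x _ => Finset.mem_univ _)
  rw [Set.ncard_eq_toFinset_card _ hA, key]
  refine Finset.sum_congr rfl fun v _ => ?_
  have hfin : ({a ∈ A | f a = v} : Set α).Finite := hA.subset (fun x hx => hx.1)
  rw [Set.ncard_eq_toFinset_card _ hfin]
  congr 1
  ext x
  simp [Set.Finite.mem_toFinset]

namespace RibbonGraph
variable (Γ : RibbonGraph)

private lemma rho_zpow (i : ℤ) (h : Γ.H) : Γ.ρ ((Γ.c ^ i) h) = Γ.ρ h := by
  have hinv : ∀ x, Γ.ρ (Γ.c⁻¹ x) = Γ.ρ x := by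
    intro x
    conv_rhs => rw [← Equiv.apply_symm_apply Γ.c x]
    exact (Γ.c_fiber (Γ.c⁻¹ x)).symm
  induction i using Int.induction_on generalizing h with
  | zero => simp
  | succ i ih =>
      have e : (Γ.c ^ ((i : ℤ) + 1)) h = (Γ.c ^ (i : ℤ)) (Γ.c h) := by
        rw [zpow_add_one]; rfl
      rw [e, ih, Γ.c_fiber]
  | pred i ih =>
      have e : (Γ.c ^ (-(i : ℤ) - 1)) h = (Γ.c ^ (-(i : ℤ))) (Γ.c⁻¹ h) := by
        rw [zpow_sub_one]; rfl
      rw [e, ih, hinv]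

private lemma rho_sameCycle {a x : Γ.H} (h : Γ.c.SameCycle a x) : Γ.ρ x = Γ.ρ a := by
  obtain ⟨i, rfl⟩ := h
  exact Γ.rho_zpow i a

/-- `|H| = Σ_v |v|`. -/
private lemma card_H_eq_sum_valency : Fintype.card Γ.H = ∑ v, Γ.valency v := by
  have := ncard_fiberwise (Set.univ : Set Γ.H) Set.finite_univ Γ.ρ
  rw [Set.ncard_univ, Nat.card_eq_fintype_card] at this
  rw [this]
  refine Finset.sum_congr rfl fun v _ => ?_
  congr 1
  ext x
  simp [valency]

/-- `|C| = Σ_v |C(v)|`. -/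
private lemma numCycles_eq_sum (hV : Nonempty Γ.V) :
    Γ.numCycles = ∑ v, Γ.numCyclesAt v := by
  classical
  set f : Set Γ.H → Γ.V := fun S =>
    if h : S.Nonempty then Γ.ρ h.choose else Classical.arbitrary Γ.V with hf
  have hfib : ∀ v, {S ∈ permOrbits Γ.c | f S = v} = {S ∈ permOrbits Γ.c | ∃ h ∈ S, Γ.ρ h = v} := by
    intro v
    ext S
    simp only [Set.mem_setOf_eq, and_congr_right_iff]
    rintro ⟨a, rfl⟩
    have ha : Γ.c.SameCycle a a := Equiv.Perm.SameCycle.refl _ _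
    have hne : ({x | Γ.c.SameCycle a x}).Nonempty := ⟨a, ha⟩
    have hfS : f {x | Γ.c.SameCycle a x} = Γ.ρ a := by
      rw [hf]
      simp only [dif_pos hne]
      exact Γ.rho_sameCycle hne.choose_spec
    rw [hfS]
    constructor
    · rintro rfl; exact ⟨a, ha, rfl⟩
    · rintro ⟨h, hh, rfl⟩; exact (Γ.rho_sameCycle hh).symm
  have hfin : (permOrbits Γ.c).Finite := Set.toFinite _
  rw [numCycles, ncard_fiberwise _ hfin f]
  refine Finset.sum_congr rfl fun v _ => ?_
  rw [hfib v]
  rfl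

/-- `|H| = |L| + 2|E|`. -/
private lemma card_H_eq (hV : Nonempty Γ.V) :
    Fintype.card Γ.H = Γ.numLegs + 2 * Γ.numEdges := by
  classical
  haveI : Fintype (Set Γ.H) := Fintype.ofFinite _
  have hsplit : Γ.legSet.ncard + Γ.legSetᶜ.ncard = Fintype.card Γ.H := by
    rw [← Nat.card_eq_fintype_card]; exact Set.ncard_add_ncard_compl _
  have hcompl : Γ.legSetᶜ = {h | Γ.κ h ≠ h} := by
    ext x; simp [legSet]
  have hfibcard : ∀ S : Set Γ.H,
      {h ∈ {h | Γ.κ h ≠ h} | ({h, Γ.κ h} : Set Γ.H) = S}.ncard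
        = if S ∈ Γ.edgeSet then 2 else 0 := by
    intro S
    by_cases hS : S ∈ Γ.edgeSet
    · obtain ⟨h0, hne0, rfl⟩ := hS
      rw [if_pos ⟨h0, hne0, rfl⟩]
      have hset : {h ∈ {h | Γ.κ h ≠ h} | ({h, Γ.κ h} : Set Γ.H) = {h0, Γ.κ h0}}
          = ({h0, Γ.κ h0} : Set Γ.H) := by
        ext x
        constructor
        · rintro ⟨hx1, hx2⟩
          rw [← hx2]; left; rfl
        · rintro (rfl | rfl)
          · exact ⟨hne0, rfl⟩
          · refine ⟨?_, ?_⟩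
            · simp only [Set.mem_setOf_eq, Γ.κ_invol]
              exact fun hc => hne0 hc.symm
            · rw [Γ.κ_invol]
              exact Set.pair_comm _ _
      rw [hset]
      exact Set.ncard_pair (fun hc => hne0 hc.symm)
    · rw [if_neg hS]
      have : {h ∈ {h | Γ.κ h ≠ h} | ({h, Γ.κ h} : Set Γ.H) = S} = ∅ := by
        ext x
        simp only [Set.mem_setOf_eq, Set.mem_empty_iff_false, iff_false, not_and]
        intro hx1 hx2
        exact hS ⟨x, hx1, hx2.symm⟩
      rw [this, Set.ncard_empty]
  have hcount : ({h | Γ.κ h ≠ h} : Set Γ.H).ncard = 2 * Γ.numEdges := by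
    rw [ncard_fiberwise _ (Set.toFinite _) (fun h => ({h, Γ.κ h} : Set Γ.H))]
    have : ∀ S : Set Γ.H, S ∈ Finset.univ →
        {h ∈ {h | Γ.κ h ≠ h} | ({h, Γ.κ h} : Set Γ.H) = S}.ncard
          = if S ∈ Γ.edgeSet then 2 else 0 := fun S _ => hfibcard S
    rw [Finset.sum_congr rfl this, ← Finset.sum_filter, Finset.sum_const, smul_eq_mul]
    have hcard : (Finset.univ.filter (· ∈ Γ.edgeSet)).card = Γ.numEdges := by
      rw [numEdges, Set.ncard_eq_toFinset_card']
      congr 1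
      ext S
      simp [Set.mem_toFinset]
    rw [hcard, Nat.mul_comm]
  rw [← hsplit, hcompl, hcount, numLegs]
  
end RibbonGraph

/-- **The fundamental inequalities for connected stable ribbon graphs.**
For every connected stable ribbon graph `Γ`, with loop number
`ℓ(Γ) = 2 g(Γ) + B(Γ) − 1`, the two inequalities
`2 ℓ(Γ) + |L(Γ)| ≥ 2 + |V(Γ)| ≥ 3` and `|H(Γ)| ≤ 3 |L(Γ)| + 6 (ℓ(Γ) − 1)`
hold (the latter read as `|H(Γ)| + 6 ≤ 3 |L(Γ)| + 6 ℓ(Γ)`). -/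
theorem RibbonGraph.graph_inequalities
    (Γ : RibbonGraph) (hstable : Γ.IsStable) (hconn : Γ.Connected) :
    (2 + (Fintype.card Γ.V : ℚ) ≤ 2 * Γ.loopNumber + Γ.numLegs ∧
      (3 : ℚ) ≤ 2 + (Fintype.card Γ.V : ℚ)) ∧
    (Fintype.card Γ.H : ℚ) + 6 ≤ 3 * Γ.numLegs + 6 * Γ.loopNumber := by
  obtain ⟨hV, -⟩ := hconn
  have hV1 : (1 : ℚ) ≤ Fintype.card Γ.V := by
    exact_mod_cast Nat.one_le_cast.mpr Fintype.card_pos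
  have q1 : (Fintype.card Γ.H : ℚ) = Γ.numLegs + 2 * Γ.numEdges := by
    rw [Γ.card_H_eq hV]; push_cast; ring
  have q2 : (Fintype.card Γ.H : ℚ) = ∑ v, (Γ.valency v : ℚ) := by
    rw [Γ.card_H_eq_sum_valency]; push_cast; ring
  have q3 : (Γ.numCycles : ℚ) = ∑ v, (Γ.numCyclesAt v : ℚ) := by
    rw [Γ.numCycles_eq_sum hV]; push_cast; ring
  have q6 : ∑ v, Γ.vertexLoop v
      = 2 * ∑ v, (Γ.g v : ℚ) + ∑ v, (Γ.b v : ℚ) + ∑ v, (Γ.numCyclesAt v : ℚ)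
        - Fintype.card Γ.V := by
    simp only [RibbonGraph.vertexLoop, Finset.sum_sub_distrib, Finset.sum_add_distrib,
      Finset.sum_const, Finset.card_univ, nsmul_eq_mul, mul_one, ← Finset.mul_sum]
  have q4 : 3 * (Fintype.card Γ.V : ℚ)
      ≤ 2 * ∑ v, Γ.vertexLoop v + ∑ v, (Γ.valency v : ℚ) := by
    have hsum := Finset.sum_le_sum (s := Finset.univ)
      (fun v _ => (hstable v).2)
    rw [Finset.sum_const, Finset.card_univ, nsmul_eq_mul, Finset.sum_add_distrib,
      ← Finset.mul_sum] at hsum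
    linarith
  have q5 : 0 ≤ ∑ v, Γ.vertexLoop v := by
    refine Finset.sum_nonneg fun v _ => ?_
    have h1 : (1 : ℚ) ≤ Γ.numCyclesAt v + Γ.b v := by
      exact_mod_cast Nat.one_le_cast.mpr (hstable v).1
    have hg : (0 : ℚ) ≤ Γ.g v := Nat.cast_nonneg _
    simp only [RibbonGraph.vertexLoop]
    linarith
  have q7 : Γ.loopNumber
      = 1 - 2 * (Fintype.card Γ.V : ℚ) + Γ.numEdges + Γ.numCycles
        + 2 * ∑ v, (Γ.g v : ℚ) + ∑ v, (Γ.b v : ℚ) := by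
    simp only [RibbonGraph.loopNumber, RibbonGraph.genus, RibbonGraph.numBoundary]
    ring
  refine ⟨⟨by linarith, by linarith⟩, by linarith⟩
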